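/- Let r, h > 0 and define γ : ℝ → ℝ³ by γ(s) = e^{φ(s)}·(r·cos φ(s), r·sin φ(s), h), where φ(s) = h·s/√(2r² + h²). Let T(s) = γ'(s), let κ = 2r√(r² + h²)/(2r² + h²), and let N(s) = A(s)/κ where A(s) = γ''(s) − (2·γ₃'(s)/γ₃(s))·γ'(s) + (‖γ'(s)‖ₑ²/γ₃(s))·e₃. Then the vector field ∇_T N(s) + κ·T(s), where ∇_T N(s) = N'(s) − (T₃(s)/γ₃(s))·N(s) − (N₃(s)/γ₃(s))·T(s) + (⟨T(s), N(s)⟩ₑ/γ₃(s))·e₃, has constant hyperbolic norm ‖∇_T N(s) + κ·T(s)‖ₑ/γ₃(s) = h²/(2r² + h²) for all s; that is, the torsion of γ is constant and equals h²/(2r² + h²). -/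

import Mathlib

open Real
open scoped RealInnerProductSpace

/-- A point/vector of Euclidean 3-space. -/
noncomputable def v3 (x y z : ℝ) : EuclideanSpace ℝ (Fin 3) := !₂[x, y, z]

/-- Hyperbolic (upper half-space) inner product of u and v at the point p. -/
noncomputable def hInner (p u v : EuclideanSpace ℝ (Fin 3)) : ℝ := ⟪u, v⟫ / (p 2) ^ 2

/-- Hyperbolic (upper half-space) norm of v at the point p. -/
noncomputable def hNorm (p v : EuclideanSpace ℝ (Fin 3)) : ℝ := ‖v‖ / p 2

/-- Covariant acceleration ∇_{γ'}γ' of a hyperbolic unit-speed curve in the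
upper half-space model: A(s) = γ''(s) − (2γ₃'(s)/γ₃(s))·γ'(s) + (‖γ'(s)‖ₑ²/γ₃(s))·e₃. -/
noncomputable def hAccel (γ : ℝ → EuclideanSpace ℝ (Fin 3)) (s : ℝ) :
    EuclideanSpace ℝ (Fin 3) :=
  deriv (deriv γ) s - (2 * deriv (fun t => γ t 2) s / γ s 2) • deriv γ s
    + (‖deriv γ s‖ ^ 2 / γ s 2) • v3 0 0 1


lemma v3_eq_smul (x y z : ℝ) : v3 x y z = x • v3 1 0 0 + y • v3 0 1 0 + z • v3 0 0 1 := by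
  ext i; fin_cases i <;> simp [v3]

lemma hasDerivAt_v3 {f g k : ℝ → ℝ} {f' g' k' : ℝ} {t : ℝ}
    (hf : HasDerivAt f f' t) (hg : HasDerivAt g g' t) (hk : HasDerivAt k k' t) :
    HasDerivAt (fun s => v3 (f s) (g s) (k s)) (v3 f' g' k') t := by
  have e : (fun s => v3 (f s) (g s) (k s)) =
      fun s => f s • v3 1 0 0 + g s • v3 0 1 0 + k s • v3 0 0 1 := by
    funext s; exact v3_eq_smul _ _ _
  rw [e, v3_eq_smul f' g' k']
  exact ((hf.smul_const _).add (hg.smul_const _)).add (hk.smul_const _)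

lemma v3_smul (a x y z : ℝ) : a • v3 x y z = v3 (a*x) (a*y) (a*z) := by
  ext i; fin_cases i <;> simp [v3]

lemma v3_add (a b c d e f : ℝ) : v3 a b c + v3 d e f = v3 (a+d) (b+e) (c+f) := by
  ext i; fin_cases i <;> simp [v3]

lemma v3_sub (a b c d e f : ℝ) : v3 a b c - v3 d e f = v3 (a-d) (b-e) (c-f) := by
  ext i; fin_cases i <;> simp [v3]

lemma v3_norm (x y z : ℝ) : ‖v3 x y z‖ = Real.sqrt (x^2+y^2+z^2) := by
  simp [EuclideanSpace.norm_eq, v3, Fin.sum_univ_three, sq_abs]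

lemma v3_inner (a b c d e f : ℝ) : ⟪v3 a b c, v3 d e f⟫ = a*d+b*e+c*f := by
  simp [v3, PiLp.inner_apply, Fin.sum_univ_three]; ring

lemma v3_apply2 (x y z : ℝ) : v3 x y z 2 = z := rfl

lemma v3_eq_iff (a b c d e f : ℝ) : v3 a b c = v3 d e f ↔ a = d ∧ b = e ∧ c = f := by
  constructor
  · intro hh
    refine ⟨congrArg (· 0) hh, congrArg (· 1) hh, congrArg (· 2) hh⟩
  · rintro ⟨rfl, rfl, rfl⟩; rfl


set_option maxHeartbeats 1000000 in
/-- For γ(s) = e^{φ(s)}·(r cos φ(s), r sin φ(s), h) with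
φ(s) = hs/√(2r² + h²), T = γ', κ = 2r√(r² + h²)/(2r² + h²) and N = A/κ, the vector field
∇_T N + κ·T has constant hyperbolic norm h²/(2r² + h²); that is, the torsion of γ is the
constant h²/(2r² + h²). -/
theorem stmt_19 (r h : ℝ) (hr : 0 < r) (hh : 0 < h)
    (φ : ℝ → ℝ) (hφ : φ = fun s => h * s / Real.sqrt (2 * r ^ 2 + h ^ 2))
    (γ : ℝ → EuclideanSpace ℝ (Fin 3))
    (hγ : γ = fun s => Real.exp (φ s) •
        v3 (r * Real.cos (φ s)) (r * Real.sin (φ s)) h)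
    (T N : ℝ → EuclideanSpace ℝ (Fin 3)) (κ : ℝ)
    (hT : T = deriv γ)
    (hκ : κ = 2 * r * Real.sqrt (r ^ 2 + h ^ 2) / (2 * r ^ 2 + h ^ 2))
    (hN : ∀ s, N s = κ⁻¹ • hAccel γ s) :
    ∀ s, ‖(deriv N s - (T s 2 / γ s 2) • N s - (N s 2 / γ s 2) • T s
        + (⟪T s, N s⟫ / γ s 2) • v3 0 0 1) + κ • T s‖ / γ s 2
      = h ^ 2 / (2 * r ^ 2 + h ^ 2) := by
  subst hT hκ
  set c := Real.sqrt (2 * r ^ 2 + h ^ 2) with hcdef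
  set q := Real.sqrt (r ^ 2 + h ^ 2) with hqdef
  have hcpos : (0:ℝ) < c := Real.sqrt_pos.2 (by positivity)
  have hqpos : (0:ℝ) < q := Real.sqrt_pos.2 (by positivity)
  have hc2 : c ^ 2 = 2 * r ^ 2 + h ^ 2 := Real.sq_sqrt (by positivity)
  have hq2 : q ^ 2 = r ^ 2 + h ^ 2 := Real.sq_sqrt (by positivity)
  have hφd : ∀ t, HasDerivAt φ (h / c) t := by
    intro t; rw [hφ]
    simpa using ((hasDerivAt_id t).const_mul h).div_const c
  have hE : ∀ t, HasDerivAt (fun u => Real.exp (φ u)) (Real.exp (φ t) * (h / c)) t :=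
    fun t => (hφd t).exp
  have hEpos : ∀ t, 0 < Real.exp (φ t) := fun t => Real.exp_pos _
  have hC : ∀ t, HasDerivAt (fun u => Real.cos (φ u)) (-Real.sin (φ t) * (h / c)) t :=
    fun t => (hφd t).cos
  have hS : ∀ t, HasDerivAt (fun u => Real.sin (φ u)) (Real.cos (φ t) * (h / c)) t :=
    fun t => (hφd t).sin
  have hγv : γ = fun u => v3 (Real.exp (φ u) * (r * Real.cos (φ u)))
      (Real.exp (φ u) * (r * Real.sin (φ u))) (Real.exp (φ u) * h) := by
    rw [hγ]; funext u; rw [v3_smul]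
  -- first derivative
  have hdγ : ∀ t, HasDerivAt γ (v3
      (h / c * (Real.exp (φ t) * (r * (Real.cos (φ t) - Real.sin (φ t)))))
      (h / c * (Real.exp (φ t) * (r * (Real.sin (φ t) + Real.cos (φ t)))))
      (h / c * (Real.exp (φ t) * h))) t := by
    intro t; rw [hγv]
    refine hasDerivAt_v3 ?_ ?_ ?_
    · have := (hE t).mul ((hC t).const_mul r); exact this.congr_deriv (by ring)
    · have := (hE t).mul ((hS t).const_mul r); exact this.congr_deriv (by ring)
    · have := (hE t).mul_const h; exact this.congr_deriv (by ring)
  have hDγ : deriv γ = fun t => v3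
      (h / c * (Real.exp (φ t) * (r * (Real.cos (φ t) - Real.sin (φ t)))))
      (h / c * (Real.exp (φ t) * (r * (Real.sin (φ t) + Real.cos (φ t)))))
      (h / c * (Real.exp (φ t) * h)) := funext fun t => (hdγ t).deriv
  have hDγp : ∀ t, deriv γ t = v3
      (h / c * (Real.exp (φ t) * (r * (Real.cos (φ t) - Real.sin (φ t)))))
      (h / c * (Real.exp (φ t) * (r * (Real.sin (φ t) + Real.cos (φ t)))))
      (h / c * (Real.exp (φ t) * h)) := fun t => (hdγ t).deriv
  -- second derivative
  have hDD : ∀ t, deriv (deriv γ) t = v3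
      ((h/c)^2 * (Real.exp (φ t) * (r * (-2 * Real.sin (φ t)))))
      ((h/c)^2 * (Real.exp (φ t) * (r * (2 * Real.cos (φ t)))))
      ((h/c)^2 * (Real.exp (φ t) * h)) := by
    intro t; rw [hDγ]
    refine HasDerivAt.deriv (hasDerivAt_v3 ?_ ?_ ?_)
    · have := ((hE t).mul (((hC t).sub (hS t)).const_mul r)).const_mul (h/c)
      exact this.congr_deriv (by simp only [Pi.sub_apply]; ring)
    · have := ((hE t).mul (((hS t).add (hC t)).const_mul r)).const_mul (h/c)
      exact this.congr_deriv (by simp only [Pi.add_apply]; ring)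
    · have := ((hE t).mul_const h).const_mul (h/c)
      exact this.congr_deriv (by ring)
  have hγ2 : ∀ t, γ t 2 = Real.exp (φ t) * h := fun t => by rw [hγv]; rfl
  have hD2 : ∀ t, deriv (fun u => γ u 2) t = Real.exp (φ t) * (h / c) * h := by
    intro t
    have e : (fun u => γ u 2) = fun u => Real.exp (φ u) * h := funext hγ2
    rw [e]; exact ((hE t).mul_const h).deriv
  have hnormsq : ∀ t, ‖deriv γ t‖ ^ 2 = (h * Real.exp (φ t)) ^ 2 := by
    intro t
    have pyth := Real.sin_sq_add_cos_sq (φ t)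
    rw [hDγp t, v3_norm]
    rw [Real.sq_sqrt (by positivity)]
    field_simp
    linear_combination (-1)*hc2 + (2*r^2)*pyth
  -- N explicitly
  have hNfun : N = fun u => v3 (-(h^2/q) * (Real.exp (φ u) * Real.cos (φ u)))
      (-(h^2/q) * (Real.exp (φ u) * Real.sin (φ u))) (r*h/q * Real.exp (φ u)) := by
    funext u
    rw [hN u]
    unfold hAccel
    rw [hDD u, hD2 u, hnormsq u, hγ2 u, hDγp u]
    simp only [v3_smul, v3_sub, v3_add]
    rw [v3_eq_iff]
    have hc0 := hcpos.ne'
    have hq0 := hqpos.ne'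
    have hE0 := (hEpos u).ne'
    refine ⟨?_, ?_, ?_⟩
    · field_simp
      linear_combination (2*r*h*Real.cos (φ u)) * hc2
    · field_simp
      linear_combination (2*r*h*Real.sin (φ u)) * hc2
    · field_simp
      linear_combination (h^2) * hc2
  -- derivative of N
  have hNd : ∀ t, deriv N t = v3
      (-(h^2/q) * ((h/c) * (Real.exp (φ t) * (Real.cos (φ t) - Real.sin (φ t)))))
      (-(h^2/q) * ((h/c) * (Real.exp (φ t) * (Real.sin (φ t) + Real.cos (φ t)))))
      (r*h/q * ((h/c) * Real.exp (φ t))) := by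
    intro t; rw [hNfun]
    refine HasDerivAt.deriv (hasDerivAt_v3 ?_ ?_ ?_)
    · have := ((hE t).mul (hC t)).const_mul (-(h^2/q)); exact this.congr_deriv (by ring)
    · have := ((hE t).mul (hS t)).const_mul (-(h^2/q)); exact this.congr_deriv (by ring)
    · have := (hE t).const_mul (r*h/q); exact this.congr_deriv (by ring)
  -- main computation
  intro s
  have pyth := Real.sin_sq_add_cos_sq (φ s)
  have hc0 := hcpos.ne'
  have hq0 := hqpos.ne'
  have hE0 := (hEpos s).ne'
  have hTs : deriv γ s = v3 (h/c*(Real.exp (φ s)*(r*(Real.cos (φ s)-Real.sin (φ s)))))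
      (h/c*(Real.exp (φ s)*(r*(Real.sin (φ s)+Real.cos (φ s))))) (h/c*(Real.exp (φ s)*h)) :=
    hDγp s
  have hNs : N s = v3 (-(h^2/q)*(Real.exp (φ s)*Real.cos (φ s)))
      (-(h^2/q)*(Real.exp (φ s)*Real.sin (φ s))) (r*h/q*Real.exp (φ s)) := by rw [hNfun]
  have hTN : ⟪deriv γ s, N s⟫ = 0 := by
    rw [hTs, hNs, v3_inner]
    field_simp
    linear_combination (r*h^3*q^2*Real.exp (φ s)^2 - 1*r*h^3*q^2*Real.exp (φ s)^2*Real.cos (φ s)^2 - 1*r*h^3*q^2*Real.exp (φ s)^2*Real.sin (φ s)^2) * hc2 + (r*h^5*Real.exp (φ s)^2 - 1*r*h^5*Real.exp (φ s)^2*Real.cos (φ s)^2 - 1*r*h^5*Real.exp (φ s)^2*Real.sin (φ s)^2 + 2*r^3*h^3*Real.exp (φ s)^2 - 2*r^3*h^3*Real.exp (φ s)^2*Real.cos (φ s)^2 - 2*r^3*h^3*Real.exp (φ s)^2*Real.sin (φ s)^2) * hq2 + (-1*r*h^7*Real.exp (φ s)^2 - 3*r^3*h^5*Real.exp (φ s)^2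 - 2*r^5*h^3*Real.exp (φ s)^2) * pyth + ((1*r^1*h^3*q^2*Real.exp (φ s)^2*Real.cos (φ s)^2) + (1*r^1*h^3*q^2*Real.exp (φ s)^2*Real.sin (φ s)^2) + (-1*r^1*h^3*q^2*Real.exp (φ s)^2)) * hc2 + ((2*r^3*h^3*Real.exp (φ s)^2*Real.cos (φ s)^2) + (1*r^1*h^5*Real.exp (φ s)^2*Real.cos (φ s)^2) + (2*r^3*h^3*Real.exp (φ s)^2*Real.sin (φ s)^2) + (1*r^1*h^5*Real.exp (φ s)^2*Real.sin (φ s)^2) + (-2*r^3*h^3*Real.exp (φ s)^2) + (-1*r^1*h^5*Real.exp (φ s)^2)) * hq2 + ((-1*r^1*h^3*Real.exp (φ s)^2) + (2*r^5*h^3*Real.exp (φ s)^2) + (3*r^3*h^5*Real.exp (φ s)^2) + (1*r^1*h^7*Real.exp (φ s)^2)) * pyth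
  have ediv1 : h / c * (Real.exp (φ s) * h) / (Real.exp (φ s) * h) = h / c := by
    field_simp
  have ediv2 : r * h / q * Real.exp (φ s) / (Real.exp (φ s) * h) = r / q := by
    field_simp
  have hfinal : (deriv N s - (deriv γ s 2 / γ s 2) • N s - (N s 2 / γ s 2) • deriv γ s
        + (⟪deriv γ s, N s⟫ / γ s 2) • v3 0 0 1)
        + (2 * r * q / (2 * r ^ 2 + h ^ 2)) • deriv γ s
      = v3 (h^3*Real.exp (φ s)/(c^3*q) * ((r^2+h^2)*Real.sin (φ s) + r^2*Real.cos (φ s)))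
          (h^3*Real.exp (φ s)/(c^3*q) * (r^2*Real.sin (φ s) - (r^2+h^2)*Real.cos (φ s)))
          (r*h^4*Real.exp (φ s)/(c^3*q)) := by
    rw [hTN, hNd s, hTs, hNs, hγ2 s, v3_apply2, v3_apply2, ediv1, ediv2]
    simp only [zero_div, zero_smul, add_zero]
    simp only [v3_smul, v3_sub, v3_add]
    rw [v3_eq_iff]
    refine ⟨?_, ?_, ?_⟩
    · field_simp
      linear_combination (h^5*c^4*q^3*Real.exp (φ s)*Real.sin (φ s) + 2*r^2*h*c^4*q^5*Real.exp (φ s)*Real.cos (φ s) - 2*r^2*h*c^4*q^5*Real.exp (φ s)*Real.sin (φ s) + 2*r^2*h^3*c^2*q^5*Real.exp (φ s)*Real.cos (φ s) - 2*r^2*h^3*c^2*q^5*Real.exp (φ s)*Real.sin (φ s) - 1*r^2*h^3*c^4*q^3*Real.exp (φ s)*Real.cos (φ s) + 3*r^2*h^3*c^4*q^3*Real.exp (φ s)*Real.sin (φ s) + 2*r^2*h^5*q^5*Real.exp (φ s)*Real.cos (φ s) - 2*r^2*h^5*q^5*Real.exp (φ s)*Real.sin (φ s) - 2*r^2*h^5*c^2*q^3*Real.exp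 (φ s)*Real.cos (φ s) + 2*r^2*h^5*c^2*q^3*Real.exp (φ s)*Real.sin (φ s) - 2*r^2*h^7*q^3*Real.exp (φ s)*Real.cos (φ s) + 2*r^2*h^7*q^3*Real.exp (φ s)*Real.sin (φ s) + 4*r^4*h*c^2*q^5*Real.exp (φ s)*Real.cos (φ s) - 4*r^4*h*c^2*q^5*Real.exp (φ s)*Real.sin (φ s) - 2*r^4*h*c^4*q^3*Real.exp (φ s)*Real.cos (φ s) + 2*r^4*h*c^4*q^3*Real.exp (φ s)*Real.sin (φ s) + 8*r^4*h^3*q^5*Real.exp (φ s)*Real.cos (φ s) - 8*r^4*h^3*q^5*Real.exp (φ s)*Real.sin (φ s) - 6*r^4*h^3*c^2*q^3*Real.exp (φ s)*Real.cos (φ s) + 6*r^4*h^3*c^2*q^3*Real.exp (φ s)*Real.sin (φ s) - 10*r^4*h^5*q^3*Real.exp (φ s)*Real.cos (φ s) + 10*r^4*h^5*q^3*Real.exp (φ s)*Real.sin (φ s) + 8*r^6*h*q^5*Real.exp (φ s)*Real.cos (φ s) - 8*r^6*h*q^5*Real.exp (φ s)*Real.sin (φ s) - 4*r^6*h*c^2*q^3*Real.exp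 (φ s)*Real.cos (φ s) + 4*r^6*h*c^2*q^3*Real.exp (φ s)*Real.sin (φ s) - 16*r^6*h^3*q^3*Real.exp (φ s)*Real.cos (φ s) + 16*r^6*h^3*q^3*Real.exp (φ s)*Real.sin (φ s) - 8*r^8*h*q^3*Real.exp (φ s)*Real.cos (φ s) + 8*r^8*h*q^3*Real.exp (φ s)*Real.sin (φ s)) * hc2 + (2*r^2*h^7*q^3*Real.exp (φ s)*Real.cos (φ s) - 2*r^2*h^7*q^3*Real.exp (φ s)*Real.sin (φ s) + 12*r^4*h^5*q^3*Real.exp (φ s)*Real.cos (φ s) - 12*r^4*h^5*q^3*Real.exp (φ s)*Real.sin (φ s) + 24*r^6*h^3*q^3*Real.exp (φ s)*Real.cos (φ s) - 24*r^6*h^3*q^3*Real.exp (φ s)*Real.sin (φ s) + 16*r^8*h*q^3*Real.exp (φ s)*Real.cos (φ s) - 16*r^8*h*q^3*Real.exp (φ s)*Real.sin (φ s)) * hq2 + ((-1*r^2*h^2*Real.cos (φ s)^1) + (3*r^2*h^2*Real.sin (φ s)^1) + (1*h^4*Real.sin (φ s)^1) + (2*r^2*q^2*Real.cos (φ s)^1)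 + (-2*r^4*Real.cos (φ s)^1) + (-2*r^2*q^2*Real.sin (φ s)^1) + (2*r^4*Real.sin (φ s)^1) + (6*r^4*h^3*c^2*q^3*Real.exp (φ s)^1*Real.cos (φ s)^1) + (-6*r^4*h^3*c^2*q^3*Real.exp (φ s)^1*Real.sin (φ s)^1) + (2*r^2*h^5*c^2*q^3*Real.exp (φ s)^1*Real.cos (φ s)^1) + (-2*r^2*h^5*c^2*q^3*Real.exp (φ s)^1*Real.sin (φ s)^1) + (-2*r^2*h^1*c^4*q^5*Real.exp (φ s)^1*Real.cos (φ s)^1) + (2*r^4*h^1*c^4*q^3*Real.exp (φ s)^1*Real.cos (φ s)^1) + (2*r^2*h^1*c^4*q^5*Real.exp (φ s)^1*Real.sin (φ s)^1) + (-2*r^4*h^1*c^4*q^3*Real.exp (φ s)^1*Real.sin (φ s)^1) + (1*r^2*h^3*c^4*q^3*Real.exp (φ s)^1*Real.cos (φ s)^1) + (-3*r^2*h^3*c^4*q^3*Real.exp (φ s)^1*Real.sin (φ s)^1) + (-1*h^5*c^4*q^3*Real.exp (φ s)^1*Real.sin (φ s)^1) + (16*r^6*h^3*q^3*Real.exp (φ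 s)^1*Real.cos (φ s)^1) + (10*r^4*h^5*q^3*Real.exp (φ s)^1*Real.cos (φ s)^1) + (-16*r^6*h^3*q^3*Real.exp (φ s)^1*Real.sin (φ s)^1) + (-10*r^4*h^5*q^3*Real.exp (φ s)^1*Real.sin (φ s)^1) + (2*r^2*h^7*q^3*Real.exp (φ s)^1*Real.cos (φ s)^1) + (-2*r^2*h^7*q^3*Real.exp (φ s)^1*Real.sin (φ s)^1) + (-4*r^4*h^1*c^2*q^5*Real.exp (φ s)^1*Real.cos (φ s)^1) + (-2*r^2*h^3*c^2*q^5*Real.exp (φ s)^1*Real.cos (φ s)^1) + (4*r^6*h^1*c^2*q^3*Real.exp (φ s)^1*Real.cos (φ s)^1) + (4*r^4*h^1*c^2*q^5*Real.exp (φ s)^1*Real.sin (φ s)^1) + (2*r^2*h^3*c^2*q^5*Real.exp (φ s)^1*Real.sin (φ s)^1) + (-4*r^6*h^1*c^2*q^3*Real.exp (φ s)^1*Real.sin (φ s)^1) + (-8*r^6*h^1*q^5*Real.exp (φ s)^1*Real.cos (φ s)^1) + (-8*r^4*h^3*q^5*Real.exp (φ s)^1*Real.cos (φ s)^1) + (-2*r^2*h^5*q^5*Real.exp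 (φ s)^1*Real.cos (φ s)^1) + (8*r^8*h^1*q^3*Real.exp (φ s)^1*Real.cos (φ s)^1) + (8*r^6*h^1*q^5*Real.exp (φ s)^1*Real.sin (φ s)^1) + (8*r^4*h^3*q^5*Real.exp (φ s)^1*Real.sin (φ s)^1) + (2*r^2*h^5*q^5*Real.exp (φ s)^1*Real.sin (φ s)^1) + (-8*r^8*h^1*q^3*Real.exp (φ s)^1*Real.sin (φ s)^1)) * hc2 + ((4*r^4*Real.cos (φ s)^1) + (2*r^2*h^2*Real.cos (φ s)^1) + (-4*r^4*Real.sin (φ s)^1) + (-2*r^2*h^2*Real.sin (φ s)^1) + (-16*r^8*h^1*q^3*Real.exp (φ s)^1*Real.cos (φ s)^1) + (-24*r^6*h^3*q^3*Real.exp (φ s)^1*Real.cos (φ s)^1) + (-12*r^4*h^5*q^3*Real.exp (φ s)^1*Real.cos (φ s)^1) + (-2*r^2*h^7*q^3*Real.exp (φ s)^1*Real.cos (φ s)^1) + (16*r^8*h^1*q^3*Real.exp (φ s)^1*Real.sin (φ s)^1) + (24*r^6*h^3*q^3*Real.exp (φ s)^1*Real.sin (φ s)^1) + (12*r^4*h^5*q^3*Real.exp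 (φ s)^1*Real.sin (φ s)^1) + (2*r^2*h^7*q^3*Real.exp (φ s)^1*Real.sin (φ s)^1)) * hq2 + (0) * pyth
    · field_simp
      linear_combination (-1*h^5*c^4*q^3*Real.exp (φ s)*Real.cos (φ s) + 2*r^2*h*c^4*q^5*Real.exp (φ s)*Real.cos (φ s) + 2*r^2*h*c^4*q^5*Real.exp (φ s)*Real.sin (φ s) + 2*r^2*h^3*c^2*q^5*Real.exp (φ s)*Real.cos (φ s) + 2*r^2*h^3*c^2*q^5*Real.exp (φ s)*Real.sin (φ s) - 3*r^2*h^3*c^4*q^3*Real.exp (φ s)*Real.cos (φ s) - 1*r^2*h^3*c^4*q^3*Real.exp (φ s)*Real.sin (φ s) + 2*r^2*h^5*q^5*Real.exp (φ s)*Real.cos (φ s) + 2*r^2*h^5*q^5*Real.exp (φ s)*Real.sin (φ s) - 2*r^2*h^5*c^2*q^3*Real.exp (φ s)*Real.cos (φ s) - 2*r^2*h^5*c^2*q^3*Real.exp (φ s)*Real.sin (φ s) - 2*r^2*h^7*q^3*Real.exp (φ s)*Real.cos (φ s) - 2*r^2*h^7*q^3*Real.exp (φ s)*Real.sin (φ s)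 + 4*r^4*h*c^2*q^5*Real.exp (φ s)*Real.cos (φ s) + 4*r^4*h*c^2*q^5*Real.exp (φ s)*Real.sin (φ s) - 2*r^4*h*c^4*q^3*Real.exp (φ s)*Real.cos (φ s) - 2*r^4*h*c^4*q^3*Real.exp (φ s)*Real.sin (φ s) + 8*r^4*h^3*q^5*Real.exp (φ s)*Real.cos (φ s) + 8*r^4*h^3*q^5*Real.exp (φ s)*Real.sin (φ s) - 6*r^4*h^3*c^2*q^3*Real.exp (φ s)*Real.cos (φ s) - 6*r^4*h^3*c^2*q^3*Real.exp (φ s)*Real.sin (φ s) - 10*r^4*h^5*q^3*Real.exp (φ s)*Real.cos (φ s) - 10*r^4*h^5*q^3*Real.exp (φ s)*Real.sin (φ s) + 8*r^6*h*q^5*Real.exp (φ s)*Real.cos (φ s) + 8*r^6*h*q^5*Real.exp (φ s)*Real.sin (φ s) - 4*r^6*h*c^2*q^3*Real.exp (φ s)*Real.cos (φ s) - 4*r^6*h*c^2*q^3*Real.exp (φ s)*Real.sin (φ s) - 16*r^6*h^3*q^3*Real.exp (φ s)*Real.cos (φ s) - 16*r^6*h^3*q^3*Real.exp (φ s)*Real.sin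 (φ s) - 8*r^8*h*q^3*Real.exp (φ s)*Real.cos (φ s) - 8*r^8*h*q^3*Real.exp (φ s)*Real.sin (φ s)) * hc2 + (2*r^2*h^7*q^3*Real.exp (φ s)*Real.cos (φ s) + 2*r^2*h^7*q^3*Real.exp (φ s)*Real.sin (φ s) + 12*r^4*h^5*q^3*Real.exp (φ s)*Real.cos (φ s) + 12*r^4*h^5*q^3*Real.exp (φ s)*Real.sin (φ s) + 24*r^6*h^3*q^3*Real.exp (φ s)*Real.cos (φ s) + 24*r^6*h^3*q^3*Real.exp (φ s)*Real.sin (φ s) + 16*r^8*h*q^3*Real.exp (φ s)*Real.cos (φ s) + 16*r^8*h*q^3*Real.exp (φ s)*Real.sin (φ s)) * hq2 + ((-1*r^2*h^2*Real.sin (φ s)^1) + (-3*r^2*h^2*Real.cos (φ s)^1) + (-1*h^4*Real.cos (φ s)^1) + (2*r^2*q^2*Real.sin (φ s)^1) + (-2*r^4*Real.sin (φ s)^1) + (2*r^2*q^2*Real.cos (φ s)^1) + (-2*r^4*Real.cos (φ s)^1) + (6*r^4*h^3*c^2*q^3*Real.exp (φ s)^1*Real.sin (φ s)^1) + (6*r^4*h^3*c^2*q^3*Real.exp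 (φ s)^1*Real.cos (φ s)^1) + (2*r^2*h^5*c^2*q^3*Real.exp (φ s)^1*Real.sin (φ s)^1) + (2*r^2*h^5*c^2*q^3*Real.exp (φ s)^1*Real.cos (φ s)^1) + (-2*r^2*h^1*c^4*q^5*Real.exp (φ s)^1*Real.sin (φ s)^1) + (2*r^4*h^1*c^4*q^3*Real.exp (φ s)^1*Real.sin (φ s)^1) + (-2*r^2*h^1*c^4*q^5*Real.exp (φ s)^1*Real.cos (φ s)^1) + (2*r^4*h^1*c^4*q^3*Real.exp (φ s)^1*Real.cos (φ s)^1) + (1*r^2*h^3*c^4*q^3*Real.exp (φ s)^1*Real.sin (φ s)^1) + (3*r^2*h^3*c^4*q^3*Real.exp (φ s)^1*Real.cos (φ s)^1) + (1*h^5*c^4*q^3*Real.exp (φ s)^1*Real.cos (φ s)^1) + (16*r^6*h^3*q^3*Real.exp (φ s)^1*Real.sin (φ s)^1) + (10*r^4*h^5*q^3*Real.exp (φ s)^1*Real.sin (φ s)^1) + (16*r^6*h^3*q^3*Real.exp (φ s)^1*Real.cos (φ s)^1) + (10*r^4*h^5*q^3*Real.exp (φ s)^1*Real.cos (φ s)^1)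 + (2*r^2*h^7*q^3*Real.exp (φ s)^1*Real.sin (φ s)^1) + (2*r^2*h^7*q^3*Real.exp (φ s)^1*Real.cos (φ s)^1) + (-4*r^4*h^1*c^2*q^5*Real.exp (φ s)^1*Real.sin (φ s)^1) + (-2*r^2*h^3*c^2*q^5*Real.exp (φ s)^1*Real.sin (φ s)^1) + (4*r^6*h^1*c^2*q^3*Real.exp (φ s)^1*Real.sin (φ s)^1) + (-4*r^4*h^1*c^2*q^5*Real.exp (φ s)^1*Real.cos (φ s)^1) + (-2*r^2*h^3*c^2*q^5*Real.exp (φ s)^1*Real.cos (φ s)^1) + (4*r^6*h^1*c^2*q^3*Real.exp (φ s)^1*Real.cos (φ s)^1) + (-8*r^6*h^1*q^5*Real.exp (φ s)^1*Real.sin (φ s)^1) + (-8*r^4*h^3*q^5*Real.exp (φ s)^1*Real.sin (φ s)^1) + (-2*r^2*h^5*q^5*Real.exp (φ s)^1*Real.sin (φ s)^1) + (8*r^8*h^1*q^3*Real.exp (φ s)^1*Real.sin (φ s)^1) + (-8*r^6*h^1*q^5*Real.exp (φ s)^1*Real.cos (φ s)^1) + (-8*r^4*h^3*q^5*Real.exp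 (φ s)^1*Real.cos (φ s)^1) + (-2*r^2*h^5*q^5*Real.exp (φ s)^1*Real.cos (φ s)^1) + (8*r^8*h^1*q^3*Real.exp (φ s)^1*Real.cos (φ s)^1)) * hc2 + ((4*r^4*Real.sin (φ s)^1) + (2*r^2*h^2*Real.sin (φ s)^1) + (4*r^4*Real.cos (φ s)^1) + (2*r^2*h^2*Real.cos (φ s)^1) + (-16*r^8*h^1*q^3*Real.exp (φ s)^1*Real.sin (φ s)^1) + (-24*r^6*h^3*q^3*Real.exp (φ s)^1*Real.sin (φ s)^1) + (-12*r^4*h^5*q^3*Real.exp (φ s)^1*Real.sin (φ s)^1) + (-2*r^2*h^7*q^3*Real.exp (φ s)^1*Real.sin (φ s)^1) + (-16*r^8*h^1*q^3*Real.exp (φ s)^1*Real.cos (φ s)^1) + (-24*r^6*h^3*q^3*Real.exp (φ s)^1*Real.cos (φ s)^1) + (-12*r^4*h^5*q^3*Real.exp (φ s)^1*Real.cos (φ s)^1) + (-2*r^2*h^7*q^3*Real.exp (φ s)^1*Real.cos (φ s)^1)) * hq2 + (0) * pyth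
    · field_simp
      linear_combination (2*r*h^2*c^4*q^5*Real.exp (φ s) + 2*r*h^4*c^2*q^5*Real.exp (φ s) - 1*r*h^4*c^4*q^3*Real.exp (φ s) + 2*r*h^6*q^5*Real.exp (φ s) - 2*r*h^6*c^2*q^3*Real.exp (φ s) - 2*r*h^8*q^3*Real.exp (φ s) + 4*r^3*h^2*c^2*q^5*Real.exp (φ s) - 2*r^3*h^2*c^4*q^3*Real.exp (φ s) + 8*r^3*h^4*q^5*Real.exp (φ s) - 6*r^3*h^4*c^2*q^3*Real.exp (φ s) - 10*r^3*h^6*q^3*Real.exp (φ s) + 8*r^5*h^2*q^5*Real.exp (φ s) - 4*r^5*h^2*c^2*q^3*Real.exp (φ s) - 16*r^5*h^4*q^3*Real.exp (φ s) - 8*r^7*h^2*q^3*Real.exp (φ s)) * hc2 + (2*r*h^8*q^3*Real.exp (φ s) + 12*r^3*h^6*q^3*Real.exp (φ s) + 24*r^5*h^4*q^3*Real.exp (φ s) + 16*r^7*h^2*q^3*Real.exp (φ s)) * hq2 + ((-2*r^2) + (-1*h^2) + (2*q^2) + (2*r^1*h^6*c^2*q^3*Real.exp (φ s)^1) + (6*r^3*h^4*c^2*q^3*Real.exp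 (φ s)^1) + (-2*r^1*h^2*c^4*q^5*Real.exp (φ s)^1) + (1*r^1*h^4*c^4*q^3*Real.exp (φ s)^1) + (2*r^3*h^2*c^4*q^3*Real.exp (φ s)^1) + (10*r^3*h^6*q^3*Real.exp (φ s)^1) + (2*r^1*h^8*q^3*Real.exp (φ s)^1) + (16*r^5*h^4*q^3*Real.exp (φ s)^1) + (-4*r^3*h^2*c^2*q^5*Real.exp (φ s)^1) + (-2*r^1*h^4*c^2*q^5*Real.exp (φ s)^1) + (4*r^5*h^2*c^2*q^3*Real.exp (φ s)^1) + (-8*r^5*h^2*q^5*Real.exp (φ s)^1) + (-8*r^3*h^4*q^5*Real.exp (φ s)^1) + (-2*r^1*h^6*q^5*Real.exp (φ s)^1) + (8*r^7*h^2*q^3*Real.exp (φ s)^1)) * hc2 + ((4*r^2) + (2*h^2) + (-16*r^7*h^2*q^3*Real.exp (φ s)^1) + (-24*r^5*h^4*q^3*Real.exp (φ s)^1) + (-12*r^3*h^6*q^3*Real.exp (φ s)^1) + (-2*r^1*h^8*q^3*Real.exp (φ s)^1)) * hq2 + (0) * pyth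
  rw [hfinal, hγ2 s, v3_norm]
  have hb : ((r^2+h^2)*Real.sin (φ s) + r^2*Real.cos (φ s))^2
      + (r^2*Real.sin (φ s) - (r^2+h^2)*Real.cos (φ s))^2 + (r*h)^2
      = (r^2+h^2)*(2*r^2+h^2) := by
    linear_combination ((r^2+h^2)^2 + r^4) * pyth
  have hkey : (h^3*Real.exp (φ s)/(c^3*q) * ((r^2+h^2)*Real.sin (φ s) + r^2*Real.cos (φ s)))^2
      + (h^3*Real.exp (φ s)/(c^3*q) * (r^2*Real.sin (φ s) - (r^2+h^2)*Real.cos (φ s)))^2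
      + (r*h^4*Real.exp (φ s)/(c^3*q))^2
      = (h^3*Real.exp (φ s)/c^2)^2 := by
    calc (h^3*Real.exp (φ s)/(c^3*q) * ((r^2+h^2)*Real.sin (φ s) + r^2*Real.cos (φ s)))^2
        + (h^3*Real.exp (φ s)/(c^3*q) * (r^2*Real.sin (φ s) - (r^2+h^2)*Real.cos (φ s)))^2
        + (r*h^4*Real.exp (φ s)/(c^3*q))^2
        = (h^3*Real.exp (φ s)/(c^3*q))^2 * (((r^2+h^2)*Real.sin (φ s) + r^2*Real.cos (φ s))^2
            + (r^2*Real.sin (φ s) - (r^2+h^2)*Real.cos (φ s))^2 + (r*h)^2) := by ring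
      _ = (h^3*Real.exp (φ s)/(c^3*q))^2 * (q^2 * c^2) := by rw [hb, hq2, hc2]
      _ = (h^3*Real.exp (φ s)/c^2)^2 := by field_simp
  rw [hkey, Real.sqrt_sq (by positivity)]
  rw [div_eq_div_iff (by positivity) (by positivity)]
  field_simp
  linear_combination (-1) * hc2
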